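/- Let k ∈ ℤ²\{0}, m₁ ∈ ℤ²\{0}, and let ℓ₂ ∈ ℤ². Then with the convention that all summation indices are nonzero lattice points, ∑_{h₁+ℓ₁=k} 1/(|h₁| |ℓ₁| |h₁−m₁|^{2−β} |ℓ₂−h₁+m₁|^{2−β}) ≤ C √(log(1+|k|)) / (|k| |ℓ₂|^{2−β}) for β ∈ (0,1), where C depends only on β, provided all the factors are over nonzero arguments (terms with a zero argument omitted). -/

import Mathlib

open scoped ENNReal

/-- Euclidean norm of a lattice point in `ℤ²`. -/
noncomputable def latNorm (m : ℤ × ℤ) : ℝ :=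
  Real.sqrt ((m.1 : ℝ)^2 + (m.2 : ℝ)^2)

namespace LatAux

lemma latNorm_nonneg (m : ℤ × ℤ) : 0 ≤ latNorm m := Real.sqrt_nonneg _

lemma latNorm_eq_abs (m : ℤ × ℤ) : latNorm m = ‖(⟨(m.1 : ℝ), (m.2 : ℝ)⟩ : ℂ)‖ := by
  rw [Complex.norm_def, Complex.normSq_mk]
  simp [latNorm]; ring_nf

lemma one_le_latNorm {m : ℤ × ℤ} (hm : m ≠ 0) : 1 ≤ latNorm m := by
  rw [show (1:ℝ) = Real.sqrt 1 by simp]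
  apply Real.sqrt_le_sqrt
  have h1 : m.1 ≠ 0 ∨ m.2 ≠ 0 := by
    by_contra h; push_neg at h; exact hm (Prod.ext h.1 h.2)
  have s1 : (0:ℝ) ≤ (m.1:ℝ)^2 := sq_nonneg _
  have s2 : (0:ℝ) ≤ (m.2:ℝ)^2 := sq_nonneg _
  rcases h1 with h1 | h1
  · have : (1:ℝ) ≤ |(m.1:ℝ)| := by
      rw [← Int.cast_abs]; exact_mod_cast Int.one_le_abs h1
    nlinarith [sq_abs ((m.1:ℝ))]
  · have : (1:ℝ) ≤ |(m.2:ℝ)| := by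
      rw [← Int.cast_abs]; exact_mod_cast Int.one_le_abs h1
    nlinarith [sq_abs ((m.2:ℝ))]

lemma latNorm_pos {m : ℤ × ℤ} (hm : m ≠ 0) : 0 < latNorm m :=
  lt_of_lt_of_le one_pos (one_le_latNorm hm)

lemma latNorm_add_le (a b : ℤ × ℤ) : latNorm (a + b) ≤ latNorm a + latNorm b := by
  rw [latNorm_eq_abs, latNorm_eq_abs, latNorm_eq_abs]
  have : (⟨((a+b).1 : ℝ), ((a+b).2 : ℝ)⟩ : ℂ) = ⟨(a.1:ℝ), (a.2:ℝ)⟩ + ⟨(b.1:ℝ), (b.2:ℝ)⟩ := by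
    simp [Complex.ext_iff]
  rw [this]
  exact norm_add_le _ _

/-- ℓ¹-size of a lattice point. -/
def l1 (m : ℤ × ℤ) : ℕ := m.1.natAbs + m.2.natAbs

lemma l1_cast (m : ℤ × ℤ) : (l1 m : ℝ) = |(m.1:ℝ)| + |(m.2:ℝ)| := by
  rw [l1, Nat.cast_add, Nat.cast_natAbs, Nat.cast_natAbs]; push_cast; ring

lemma latNorm_le_l1 (m : ℤ × ℤ) : latNorm m ≤ (l1 m : ℝ) := by
  rw [l1_cast, latNorm]
  have h2 : (m.1:ℝ)^2 + (m.2:ℝ)^2 ≤ (|(m.1:ℝ)| + |(m.2:ℝ)|)^2 := by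
    nlinarith [abs_nonneg ((m.1:ℝ)), abs_nonneg ((m.2:ℝ)), sq_abs ((m.1:ℝ)), sq_abs ((m.2:ℝ))]
  calc Real.sqrt ((m.1:ℝ)^2 + (m.2:ℝ)^2) ≤ Real.sqrt ((|(m.1:ℝ)| + |(m.2:ℝ)|)^2) :=
        Real.sqrt_le_sqrt h2
    _ = |(m.1:ℝ)| + |(m.2:ℝ)| := Real.sqrt_sq (by positivity)

lemma l1_le_two_latNorm (m : ℤ × ℤ) : (l1 m : ℝ) ≤ 2 * latNorm m := by
  have h1 : |(m.1:ℝ)| ≤ latNorm m := by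
    rw [latNorm, ← Real.sqrt_sq_eq_abs]
    exact Real.sqrt_le_sqrt (by nlinarith [sq_nonneg ((m.2:ℝ))])
  have h2 : |(m.2:ℝ)| ≤ latNorm m := by
    rw [latNorm, ← Real.sqrt_sq_eq_abs]
    exact Real.sqrt_le_sqrt (by nlinarith [sq_nonneg ((m.1:ℝ))])
  rw [l1_cast]; linarith

lemma one_le_l1 {m : ℤ × ℤ} (hm : m ≠ 0) : 1 ≤ l1 m := by
  have h1 : m.1 ≠ 0 ∨ m.2 ≠ 0 := by
    by_contra h; push_neg at h; exact hm (Prod.ext h.1 h.2)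
  unfold l1; omega

/-- Cauchy–Schwarz for ENNReal tsums over a countable discrete type. -/
lemma tsum_cauchy_schwarz {α : Type*} [Countable α] [MeasurableSpace α]
    [MeasurableSingletonClass α] (f g : α → ℝ≥0∞) :
    ∑' a, f a * g a ≤ (∑' a, f a ^ (2:ℝ)) ^ (1/2 : ℝ) * (∑' a, g a ^ (2:ℝ)) ^ (1/2 : ℝ) := by
  have hconj : (2:ℝ).HolderConjugate 2 := by
    exact Real.HolderConjugate.two_two
  have := ENNReal.lintegral_mul_le_Lp_mul_Lq (MeasureTheory.Measure.count (α := α)) hconj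
    (measurable_of_countable f).aemeasurable (measurable_of_countable g).aemeasurable
  simpa [MeasureTheory.lintegral_count] using this





lemma int_natAbs_tsum_le (ψ : ℕ → ℝ≥0∞) : ∑' a : ℤ, ψ a.natAbs ≤ 2 * ∑' n : ℕ, ψ n := by
  set S : Set ℤ := {a : ℤ | 0 ≤ a} with hS
  have hsplit := Summable.tsum_add_tsum_compl (s := S) (f := fun a : ℤ => ψ a.natAbs)
    ENNReal.summable ENNReal.summable
  have h1 : ∑' a : S, ψ (a.1.natAbs) ≤ ∑' n : ℕ, ψ n := by
    apply Summable.tsum_le_tsum_of_inj (fun a : S => a.1.natAbs)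
    · rintro ⟨a, ha⟩ ⟨b, hb⟩ hab
      simp only [hS, Set.mem_setOf_eq] at ha hb
      dsimp only at hab
      simp only [Subtype.mk.injEq]
      omega
    · intro c _; exact zero_le
    · intro b; exact le_rfl
    · exact ENNReal.summable
    · exact ENNReal.summable
  have h2 : ∑' a : ↑Sᶜ, ψ (a.1.natAbs) ≤ ∑' n : ℕ, ψ n := by
    apply Summable.tsum_le_tsum_of_inj (fun a : ↑Sᶜ => a.1.natAbs)
    · rintro ⟨a, ha⟩ ⟨b, hb⟩ hab
      simp only [hS, Set.mem_compl_iff, Set.mem_setOf_eq, not_le] at ha hb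
      dsimp only at hab
      simp only [Subtype.mk.injEq]
      omega
    · intro c _; exact zero_le
    · intro b; exact le_rfl
    · exact ENNReal.summable
    · exact ENNReal.summable
  calc ∑' a : ℤ, ψ a.natAbs
      = ∑' a : S, ψ (a.1.natAbs) + ∑' a : ↑Sᶜ, ψ (a.1.natAbs) := hsplit.symm
    _ ≤ ∑' n : ℕ, ψ n + ∑' n : ℕ, ψ n := add_le_add h1 h2
    _ = 2 * ∑' n : ℕ, ψ n := (two_mul _).symm

lemma master (φ : ℕ → ℝ≥0∞) :
    ∑' h : ℤ × ℤ, φ (l1 h) ≤ 4 * ∑' n : ℕ, (n + 1 : ℝ≥0∞) * φ n := by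
  have step1 : ∑' h : ℤ × ℤ, φ (l1 h)
      = ∑' a : ℤ, ∑' b : ℤ, φ (Int.natAbs a + Int.natAbs b) :=
    ENNReal.tsum_prod (f := fun a b => φ (Int.natAbs a + Int.natAbs b))
  have step2 : ∑' a : ℤ, ∑' b : ℤ, φ (Int.natAbs a + Int.natAbs b)
      ≤ ∑' a : ℤ, 2 * ∑' n : ℕ, φ (Int.natAbs a + n) :=
    ENNReal.tsum_le_tsum fun a => int_natAbs_tsum_le (fun t => φ (Int.natAbs a + t))
  have step3 : ∑' a : ℤ, 2 * ∑' n : ℕ, φ (Int.natAbs a + n)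
      = 2 * ∑' n : ℕ, ∑' a : ℤ, φ (Int.natAbs a + n) := by
    rw [ENNReal.tsum_mul_left, ENNReal.tsum_comm]
  have step4 : ∑' n : ℕ, ∑' a : ℤ, φ (Int.natAbs a + n)
      ≤ ∑' n : ℕ, 2 * ∑' m : ℕ, φ (m + n) :=
    ENNReal.tsum_le_tsum fun n => int_natAbs_tsum_le (fun t => φ (t + n))
  have step5 : ∑' n : ℕ, 2 * ∑' m : ℕ, φ (m + n)
      = 2 * ∑' p : ℕ × ℕ, φ (p.1 + p.2) := by
    rw [ENNReal.tsum_mul_left]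
    congr 1
    exact (ENNReal.tsum_comm (f := fun m n => φ (m + n))).symm.trans
      (ENNReal.tsum_prod (f := fun m n => φ (m + n))).symm
  have step6 : ∑' p : ℕ × ℕ, φ (p.1 + p.2) = ∑' n : ℕ, (n + 1 : ℝ≥0∞) * φ n := by
    rw [← Finset.HasAntidiagonal.sigmaAntidiagonalEquivProd.tsum_eq (fun p : ℕ × ℕ => φ (p.1 + p.2))]
    have : ∀ x : (n : ℕ) × {p // p ∈ Finset.HasAntidiagonal.antidiagonal n},
        φ ((Finset.HasAntidiagonal.sigmaAntidiagonalEquivProd x).1 + (Finset.HasAntidiagonal.sigmaAntidiagonalEquivProd x).2)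
        = φ x.1 := by
      rintro ⟨n, ⟨p, hp⟩⟩
      simp only [Finset.HasAntidiagonal.sigmaAntidiagonalEquivProd, Equiv.coe_fn_mk]
      rw [Finset.HasAntidiagonal.mem_antidiagonal.mp hp]
    rw [tsum_congr this]
    rw [ENNReal.tsum_sigma (f := fun n (_ : {p // p ∈ Finset.HasAntidiagonal.antidiagonal n}) => φ n)]
    congr 1
    ext n
    rw [tsum_fintype, Finset.sum_const, nsmul_eq_mul]
    congr 1
    simp [Finset.Nat.card_antidiagonal]
  calc ∑' h : ℤ × ℤ, φ (l1 h) ≤ ∑' a : ℤ, 2 * ∑' n : ℕ, φ (Int.natAbs a + n) :=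
        step1 ▸ step2
    _ = 2 * ∑' n : ℕ, ∑' a : ℤ, φ (Int.natAbs a + n) := step3
    _ ≤ 2 * ∑' n : ℕ, 2 * ∑' m : ℕ, φ (m + n) := by
        exact mul_le_mul_right step4 2
    _ = 4 * ∑' p : ℕ × ℕ, φ (p.1 + p.2) := by rw [step5, ← mul_assoc]; norm_num
    _ = 4 * ∑' n : ℕ, (n + 1 : ℝ≥0∞) * φ n := by rw [step6]



/-- Harmonic-type bound. -/
lemma sum_Icc_one_div_le (N : ℕ) (hN : 1 ≤ N) :
    ∑ n ∈ Finset.Icc 1 N, (1/(n:ℝ)) ≤ 1 + Real.log N := by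
  have h1 : ∑ n ∈ Finset.Icc 1 N, (1/(n:ℝ)) = ((harmonic N : ℚ) : ℝ) := by
    rw [show Finset.Icc 1 N = Finset.Ico 1 (N+1) by rw [Finset.Ico_add_one_right_eq_Icc],
      Finset.sum_Ico_eq_sum_range]
    push_cast [harmonic]
    refine Finset.sum_congr rfl fun i _ => ?_
    rw [one_div]
    norm_num [add_comm]
  rw [h1]
  exact_mod_cast harmonic_le_one_add_log N

/-- Telescoping tail bound for `∑ 1/n³`. -/
lemma tail_cube (N : ℕ) (hN : 2 ≤ N) :
    ∑' n : ℕ, (if N ≤ n then ENNReal.ofReal (1/(n:ℝ)^3) else 0)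
      ≤ ENNReal.ofReal (1/(2*((N:ℝ)-1)^2)) := by
  rw [ENNReal.tsum_eq_iSup_sum]
  refine iSup_le fun s => ?_
  set B := (s.sup id) + 1 with hB
  have hfil : ∑ n ∈ s, (if N ≤ n then ENNReal.ofReal (1/(n:ℝ)^3) else 0)
      = ∑ n ∈ s.filter (fun n => N ≤ n), ENNReal.ofReal (1/(n:ℝ)^3) := by
    rw [Finset.sum_filter]
  have hsub : s.filter (fun n => N ≤ n) ⊆ Finset.Ico N B := by
    intro n hn
    rw [Finset.mem_filter] at hn
    rw [Finset.mem_Ico]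
    refine ⟨hn.2, ?_⟩
    have := Finset.le_sup (f := id) hn.1
    simp only [id] at this
    omega
  have hmono : ∑ n ∈ s.filter (fun n => N ≤ n), ENNReal.ofReal (1/(n:ℝ)^3)
      ≤ ∑ n ∈ Finset.Ico N B, ENNReal.ofReal (1/(n:ℝ)^3) :=
    Finset.sum_le_sum_of_subset hsub
  have hreal : ∑ n ∈ Finset.Ico N B, (1/(n:ℝ)^3) ≤ 1/(2*((N:ℝ)-1)^2) := by
    rw [Finset.sum_Ico_eq_sum_range]
    set F : ℕ → ℝ := fun i => 1/(2*((N:ℝ)-1+i)^2) with hF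
    have key : ∀ i : ℕ, (1:ℝ)/((N+i:ℕ):ℝ)^3 ≤ F i - F (i+1) := by
      intro i
      have hx : (2:ℝ) ≤ (N:ℝ) + i := by
        have : (2:ℝ) ≤ (N:ℝ) := by exact_mod_cast hN
        have : (0:ℝ) ≤ (i:ℝ) := Nat.cast_nonneg i
        linarith
      have h1 : (0:ℝ) < (N:ℝ) - 1 + i := by linarith
      have h2 : (0:ℝ) < (N:ℝ) + i := by linarith
      have hcast : ((N+i:ℕ):ℝ) = (N:ℝ) + i := by push_cast; ring
      have e1 : F i = 1/(2*((N:ℝ)-1+i)^2) := rfl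
      have e2 : F (i+1) = 1/(2*((N:ℝ)+i)^2) := by
        simp only [hF]
        push_cast
        have : (N:ℝ) - 1 + ((i:ℝ)+1) = (N:ℝ) + i := by ring
        rw [this]
      rw [hcast, e1, e2]
      rw [div_sub_div _ _ (by positivity) (by positivity), div_le_div_iff₀ (by positivity) (by positivity)]
      nlinarith [sq_nonneg ((N:ℝ)+i), sq_nonneg ((N:ℝ)-1+i), mul_pos h1 h2]
    calc ∑ i ∈ Finset.range (B - N), (1:ℝ)/((N+i:ℕ):ℝ)^3
        ≤ ∑ i ∈ Finset.range (B - N), (F i - F (i+1)) := Finset.sum_le_sum fun i _ => key i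
      _ = F 0 - F (B - N) := Finset.sum_range_sub' F (B - N)
      _ ≤ F 0 := by
          have : 0 ≤ F (B - N) := by positivity
          linarith
      _ = 1/(2*((N:ℝ)-1)^2) := by simp [hF]
  calc ∑ n ∈ s, (if N ≤ n then ENNReal.ofReal (1/(n:ℝ)^3) else 0)
      ≤ ∑ n ∈ Finset.Ico N B, ENNReal.ofReal (1/(n:ℝ)^3) := by rw [hfil]; exact hmono
    _ = ENNReal.ofReal (∑ n ∈ Finset.Ico N B, (1/(n:ℝ)^3)) :=
        (ENNReal.ofReal_sum_of_nonneg fun i _ => by positivity).symm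
    _ ≤ ENNReal.ofReal (1/(2*((N:ℝ)-1)^2)) := ENNReal.ofReal_le_ofReal hreal

end LatAux

namespace LatAux

lemma latS1 (R : ℝ) (hR : 1 ≤ R) :
    ∑' h : ℤ × ℤ, (if h ≠ 0 ∧ latNorm h ≤ R then ENNReal.ofReal (1/latNorm h^2) else 0)
      ≤ ENNReal.ofReal (32 * (1 + Real.log (2*R))) := by
  set φ : ℕ → ℝ≥0∞ := fun n => if 1 ≤ n ∧ (n:ℝ) ≤ 2*R then ENNReal.ofReal (4/(n:ℝ)^2) else 0
    with hφ
  have hpt : ∀ h : ℤ × ℤ, (if h ≠ 0 ∧ latNorm h ≤ R then ENNReal.ofReal (1/latNorm h^2) else 0)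
      ≤ φ (l1 h) := by
    intro h
    split_ifs with hc
    · have h1 : 1 ≤ l1 h := one_le_l1 hc.1
      have h2 : (l1 h : ℝ) ≤ 2*R := le_trans (l1_le_two_latNorm h) (by linarith [hc.2])
      have hpos : 0 < latNorm h := latNorm_pos hc.1
      have hl1pos : (0:ℝ) < l1 h := by exact_mod_cast h1
      rw [hφ]
      simp only [h1, h2, and_self, if_true]
      apply ENNReal.ofReal_le_ofReal
      rw [div_le_div_iff₀ (by positivity) (by positivity)]
      have := l1_le_two_latNorm h
      nlinarith
    · exact zero_le
  refine le_trans (ENNReal.tsum_le_tsum hpt) (le_trans (master φ) ?_)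
  set ψ : ℕ → ℝ≥0∞ := fun n => if 1 ≤ n ∧ (n:ℝ) ≤ 2*R then ENNReal.ofReal (8/(n:ℝ)) else 0
    with hψ
  have hstep : ∀ n : ℕ, (n + 1 : ℝ≥0∞) * φ n ≤ ψ n := by
    intro n
    simp only [hφ, hψ]
    split_ifs with hc
    · have hn1 : (1:ℝ) ≤ (n:ℝ) := by exact_mod_cast hc.1
      have : ((n:ℝ≥0∞) + 1) = ENNReal.ofReal ((n:ℝ) + 1) := by
        rw [ENNReal.ofReal_add (by positivity) (by norm_num), ENNReal.ofReal_natCast,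
          ENNReal.ofReal_one]
      rw [this, ← ENNReal.ofReal_mul (by positivity)]
      apply ENNReal.ofReal_le_ofReal
      rw [show ((n:ℝ)+1) * (4/(n:ℝ)^2) = (((n:ℝ)+1)*4)/(n:ℝ)^2 by ring]
      rw [div_le_div_iff₀ (by positivity) (by positivity)]
      nlinarith
    · simp
  refine le_trans (mul_le_mul_right (ENNReal.tsum_le_tsum hstep) 4) ?_
  set N := ⌊2*R⌋₊ with hN
  have hN1 : 1 ≤ N := by
    rw [hN]
    exact Nat.le_floor (by push_cast; linarith)
  have hNle : (N:ℝ) ≤ 2*R := Nat.floor_le (by linarith)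
  have hsum : ∑' n : ℕ, ψ n = ∑ n ∈ Finset.Icc 1 N, ψ n := by
    apply tsum_eq_sum
    intro b hb
    simp only [hψ]
    split_ifs with hc
    · exfalso
      exact hb (Finset.mem_Icc.mpr ⟨hc.1, Nat.le_floor hc.2⟩)
    · rfl
  rw [hsum]
  have hsum2 : ∑ n ∈ Finset.Icc 1 N, ψ n = ENNReal.ofReal (∑ n ∈ Finset.Icc 1 N, 8/(n:ℝ)) := by
    rw [ENNReal.ofReal_sum_of_nonneg (fun i _ => by positivity)]
    apply Finset.sum_congr rfl
    intro n hn
    rw [Finset.mem_Icc] at hn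
    rw [hψ]
    have : (n:ℝ) ≤ 2*R := le_trans (by exact_mod_cast hn.2) hNle
    simp only [hn.1, this, and_self, if_true]
  rw [hsum2]
  have hreal : ∑ n ∈ Finset.Icc 1 N, 8/(n:ℝ) ≤ 8 * (1 + Real.log (2*R)) := by
    have : ∑ n ∈ Finset.Icc 1 N, 8/(n:ℝ) = 8 * ∑ n ∈ Finset.Icc 1 N, 1/(n:ℝ) := by
      rw [Finset.mul_sum]
      exact Finset.sum_congr rfl fun n _ => by ring
    rw [this]
    have hlog : Real.log N ≤ Real.log (2*R) :=
      Real.log_le_log (by exact_mod_cast hN1) hNle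
    have := sum_Icc_one_div_le N hN1
    nlinarith [this, hlog]
  calc (4:ℝ≥0∞) * ENNReal.ofReal (∑ n ∈ Finset.Icc 1 N, 8/(n:ℝ))
      ≤ 4 * ENNReal.ofReal (8 * (1 + Real.log (2*R))) := by
        exact mul_le_mul_right (ENNReal.ofReal_le_ofReal hreal) 4
    _ = ENNReal.ofReal (32 * (1 + Real.log (2*R))) := by
        rw [show (4:ℝ≥0∞) = ENNReal.ofReal 4 by norm_num, ← ENNReal.ofReal_mul (by norm_num)]
        ring_nf

lemma latS2 (R : ℝ) (hR : 2 ≤ R) :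
    ∑' h : ℤ × ℤ, (if h ≠ 0 ∧ R ≤ latNorm h then ENNReal.ofReal (1/latNorm h^4) else 0)
      ≤ ENNReal.ofReal (256 / R^2) := by
  set φ : ℕ → ℝ≥0∞ := fun n => if R ≤ (n:ℝ) then ENNReal.ofReal (16/(n:ℝ)^4) else 0 with hφ
  have hpt : ∀ h : ℤ × ℤ, (if h ≠ 0 ∧ R ≤ latNorm h then ENNReal.ofReal (1/latNorm h^4) else 0)
      ≤ φ (l1 h) := by
    intro h
    split_ifs with hc
    · have h2 : R ≤ (l1 h : ℝ) := le_trans hc.2 (latNorm_le_l1 h)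
      have hpos : 0 < latNorm h := latNorm_pos hc.1
      have hl1pos : (0:ℝ) < l1 h := lt_of_lt_of_le (by linarith) h2
      rw [hφ]
      simp only [h2, if_true]
      apply ENNReal.ofReal_le_ofReal
      rw [div_le_div_iff₀ (by positivity) (by positivity)]
      have hle := l1_le_two_latNorm h
      have : ((l1 h : ℝ))^4 ≤ (2 * latNorm h)^4 := pow_le_pow_left₀ (le_of_lt hl1pos) hle 4
      nlinarith
    · exact zero_le
  refine le_trans (ENNReal.tsum_le_tsum hpt) (le_trans (master φ) ?_)
  set N₀ := ⌈R⌉₊ with hN₀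
  have hN₀2 : 2 ≤ N₀ := by
    have h1 : 1 < ⌈R⌉₊ := Nat.lt_ceil.mpr (by push_cast; linarith)
    omega
  have hRN₀ : R ≤ (N₀:ℝ) := Nat.le_ceil R
  set ψ : ℕ → ℝ≥0∞ := fun n => if N₀ ≤ n then ENNReal.ofReal (32/(n:ℝ)^3) else 0 with hψ
  have hstep : ∀ n : ℕ, (n + 1 : ℝ≥0∞) * φ n ≤ ψ n := by
    intro n
    simp only [hφ, hψ]
    split_ifs with hc hc2
    · have hn1 : (1:ℝ) ≤ (n:ℝ) := by linarith
      have : ((n:ℝ≥0∞) + 1) = ENNReal.ofReal ((n:ℝ) + 1) := by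
        rw [ENNReal.ofReal_add (by positivity) (by norm_num), ENNReal.ofReal_natCast,
          ENNReal.ofReal_one]
      rw [this, ← ENNReal.ofReal_mul (by positivity)]
      apply ENNReal.ofReal_le_ofReal
      rw [show ((n:ℝ)+1) * (16/(n:ℝ)^4) = (((n:ℝ)+1)*16)/(n:ℝ)^4 by ring]
      rw [div_le_div_iff₀ (by positivity) (by positivity)]
      nlinarith [mul_le_mul_of_nonneg_left (show (n:ℝ)+1 ≤ 2*(n:ℝ) by linarith)
        (show (0:ℝ) ≤ 16*(n:ℝ)^3 by positivity)]
    · exfalso; exact hc2 (Nat.ceil_le.mpr hc)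
    · simp
    · simp
  refine le_trans (mul_le_mul_right (ENNReal.tsum_le_tsum hstep) 4) ?_
  have hψeq : ∀ n : ℕ, ψ n = ENNReal.ofReal 32 * (if N₀ ≤ n then ENNReal.ofReal (1/(n:ℝ)^3) else 0) := by
    intro n
    simp only [hψ]
    split_ifs with hc
    · rw [← ENNReal.ofReal_mul (by norm_num)]
      congr 1
      ring
    · rw [mul_zero]
  have htail := tail_cube N₀ hN₀2
  have hchain : ∑' n : ℕ, ψ n ≤ ENNReal.ofReal 32 * ENNReal.ofReal (1/(2*((N₀:ℝ)-1)^2)) := by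
    rw [tsum_congr hψeq, ENNReal.tsum_mul_left]
    exact mul_le_mul_right htail _
  refine le_trans (mul_le_mul_right hchain 4) ?_
  rw [← ENNReal.ofReal_mul (by norm_num)]
  rw [show (4:ℝ≥0∞) = ENNReal.ofReal 4 by norm_num, ← ENNReal.ofReal_mul (by norm_num)]
  apply ENNReal.ofReal_le_ofReal
  have hx : R/2 ≤ (N₀:ℝ) - 1 := by linarith
  have hxpos : (0:ℝ) < (N₀:ℝ) - 1 := by
    have : (2:ℝ) ≤ (N₀:ℝ) := by exact_mod_cast hN₀2
    linarith
  have hRpos : (0:ℝ) < R := by linarith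
  rw [show (4:ℝ) * (32 * (1/(2*((N₀:ℝ)-1)^2))) = 64/((N₀:ℝ)-1)^2 by field_simp; ring]
  rw [div_le_div_iff₀ (by positivity) (by positivity)]
  nlinarith

lemma latS3 (γ : ℝ) (hγ : 2 < γ) :
    ∃ c : ℝ, 0 < c ∧
      ∑' h : ℤ × ℤ, (if h ≠ 0 then ENNReal.ofReal (1/latNorm h ^ γ) else 0)
        ≤ ENNReal.ofReal c := by
  set u : ℕ → ℝ := fun n => ((n:ℝ)^(γ-1))⁻¹ with hu
  have hsummable : Summable u := Real.summable_nat_rpow_inv.2 (by linarith)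
  set φ : ℕ → ℝ≥0∞ := fun n => if 1 ≤ n then ENNReal.ofReal ((2:ℝ)^γ/(n:ℝ)^γ) else 0 with hφ
  have hpt : ∀ h : ℤ × ℤ, (if h ≠ 0 then ENNReal.ofReal (1/latNorm h ^ γ) else 0)
      ≤ φ (l1 h) := by
    intro h
    split_ifs with hc
    · have h1 : 1 ≤ l1 h := one_le_l1 hc
      have hl1pos : (0:ℝ) < l1 h := by exact_mod_cast h1
      have hpos : 0 < latNorm h := latNorm_pos hc
      rw [hφ]
      simp only [h1, if_true]
      apply ENNReal.ofReal_le_ofReal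
      have hhalf : (l1 h : ℝ)/2 ≤ latNorm h := by linarith [l1_le_two_latNorm h]
      have hrp : ((l1 h : ℝ)/2)^γ ≤ latNorm h ^ γ :=
        Real.rpow_le_rpow (by positivity) hhalf (by linarith)
      rw [Real.div_rpow (by positivity) (by norm_num)] at hrp
      have hl1rp : (0:ℝ) < (l1 h : ℝ)^γ := Real.rpow_pos_of_pos hl1pos γ
      have h2rp : (0:ℝ) < (2:ℝ)^γ := Real.rpow_pos_of_pos (by norm_num) γ
      have hlat : (0:ℝ) < latNorm h ^ γ := Real.rpow_pos_of_pos hpos γ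
      rw [div_le_div_iff₀ (by positivity) (by positivity)]
      calc (1:ℝ) * (l1 h : ℝ)^γ = (l1 h : ℝ)^γ := one_mul _
        _ ≤ (2:ℝ)^γ * latNorm h ^ γ := by
            rw [div_le_iff₀ h2rp] at hrp
            linarith [hrp]
    · exact zero_le
  have hbound : ∀ n : ℕ, (n + 1 : ℝ≥0∞) * φ n ≤ ENNReal.ofReal ((2:ℝ)^(γ+1) * u n) := by
    intro n
    simp only [hφ]
    split_ifs with hc
    · have hn1 : (1:ℝ) ≤ (n:ℝ) := by exact_mod_cast hc
      have hnpos : (0:ℝ) < (n:ℝ) := by linarith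
      have : ((n:ℝ≥0∞) + 1) = ENNReal.ofReal ((n:ℝ) + 1) := by
        rw [ENNReal.ofReal_add (by positivity) (by norm_num), ENNReal.ofReal_natCast,
          ENNReal.ofReal_one]
      rw [this, ← ENNReal.ofReal_mul (by positivity)]
      apply ENNReal.ofReal_le_ofReal
      have hun : u n = (n:ℝ)/(n:ℝ)^γ := by
        rw [hu]
        simp only
        rw [← Real.rpow_neg (le_of_lt hnpos), show -(γ-1) = 1-γ by ring,
          Real.rpow_sub hnpos, Real.rpow_one]
      rw [hun, Real.rpow_add (by norm_num : (0:ℝ) < 2), Real.rpow_one]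
      have hfac : (0:ℝ) ≤ (2:ℝ)^γ/(n:ℝ)^γ := by positivity
      calc ((n:ℝ)+1) * ((2:ℝ)^γ/(n:ℝ)^γ) ≤ (2*(n:ℝ)) * ((2:ℝ)^γ/(n:ℝ)^γ) :=
            mul_le_mul_of_nonneg_right (by linarith) hfac
        _ = (2:ℝ)^γ * 2 * ((n:ℝ)/(n:ℝ)^γ) := by ring
    · simp
  set T : ℝ≥0∞ := ∑' h : ℤ × ℤ, (if h ≠ 0 then ENNReal.ofReal (1/latNorm h ^ γ) else 0) with hT
  have hTle : T ≤ 4 * ENNReal.ofReal ((2:ℝ)^(γ+1) * ∑' n, u n) := by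
    refine le_trans (ENNReal.tsum_le_tsum hpt) (le_trans (master φ) ?_)
    refine mul_le_mul_right (le_trans (ENNReal.tsum_le_tsum hbound) ?_) 4
    rw [← ENNReal.ofReal_tsum_of_nonneg (fun n => by positivity)
      (hsummable.mul_left _)]
    apply ENNReal.ofReal_le_ofReal
    rw [tsum_mul_left]
  have htsum_nonneg : 0 ≤ ∑' n, u n := tsum_nonneg (fun n => by positivity)
  have h2p : (0:ℝ) ≤ (2:ℝ)^(γ+1) := le_of_lt (Real.rpow_pos_of_pos two_pos _)
  have hcn : (0:ℝ) ≤ 4 * ((2:ℝ)^(γ+1) * ∑' n, u n) :=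
    mul_nonneg (by norm_num) (mul_nonneg h2p htsum_nonneg)
  refine ⟨4 * ((2:ℝ)^(γ+1) * ∑' n, u n) + 1, by linarith, ?_⟩
  refine le_trans hTle ?_
  rw [show (4:ℝ≥0∞) = ENNReal.ofReal 4 by norm_num, ← ENNReal.ofReal_mul (by norm_num)]
  exact ENNReal.ofReal_le_ofReal (by linarith)

end LatAux

namespace LatAux

lemma latNorm_neg (m : ℤ × ℤ) : latNorm (-m) = latNorm m := by
  simp only [latNorm, Prod.fst_neg, Prod.snd_neg, Int.cast_neg, neg_sq]

noncomputable def lemAC : ℝ := 256*((2+Real.log 6)/Real.log 2 + 1)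

lemma lemAC_pos : 0 < lemAC := by
  have hlog2 : 0 < Real.log 2 := Real.log_pos one_lt_two
  have hlog6 : 0 < Real.log 6 := Real.log_pos (by norm_num)
  unfold lemAC
  positivity

set_option maxHeartbeats 1000000 in
lemma lemmaA (k : ℤ × ℤ) (hk : k ≠ 0) :
    ∑' h : ℤ × ℤ, (if h ≠ 0 ∧ k - h ≠ 0 then
        ENNReal.ofReal (1/(latNorm h^2 * latNorm (k-h)^2)) else 0)
      ≤ ENNReal.ofReal (lemAC * Real.log (1 + latNorm k) / latNorm k ^ 2) := by
  set C₁ : ℝ := lemAC with hC₁'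
  have hC₁ : C₁ = 256*((2+Real.log 6)/Real.log 2 + 1) := rfl
  have hlog2 : 0 < Real.log 2 := Real.log_pos one_lt_two
  have hlog6 : 0 < Real.log 6 := Real.log_pos (by norm_num)
  set K := latNorm k with hKdef
  have hK : 1 ≤ K := one_le_latNorm hk
  have hKpos : 0 < K := by linarith
  set f₁ : ℤ × ℤ → ℝ≥0∞ := fun h => if h ≠ 0 ∧ latNorm h ≤ 2*K then
    ENNReal.ofReal ((4/K^2) * (1/latNorm h^2)) else 0 with hf₁
  set f₂ : ℤ × ℤ → ℝ≥0∞ := fun h => if k - h ≠ 0 ∧ latNorm (k-h) ≤ 3*K then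
    ENNReal.ofReal ((4/K^2) * (1/latNorm (k-h)^2)) else 0 with hf₂
  set f₃ : ℤ × ℤ → ℝ≥0∞ := fun h => if h ≠ 0 ∧ 2*K ≤ latNorm h then
    ENNReal.ofReal (4 * (1/latNorm h^4)) else 0 with hf₃
  have hpt : ∀ h : ℤ × ℤ, (if h ≠ 0 ∧ k - h ≠ 0 then
      ENNReal.ofReal (1/(latNorm h^2 * latNorm (k-h)^2)) else 0) ≤ f₁ h + f₂ h + f₃ h := by
    intro h
    split_ifs with hc
    · obtain ⟨hh, hkh⟩ := hc
      have ha : 1 ≤ latNorm h := one_le_latNorm hh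
      have hb : 1 ≤ latNorm (k - h) := one_le_latNorm hkh
      have hapos : 0 < latNorm h := by linarith
      have hbpos : 0 < latNorm (k - h) := by linarith
      have t1 : K ≤ latNorm h + latNorm (k - h) := by
        have he : h + (k - h) = k := by ring
        calc K = latNorm (h + (k - h)) := by rw [he]
          _ ≤ latNorm h + latNorm (k - h) := latNorm_add_le _ _
      have t2 : latNorm h ≤ K + latNorm (k - h) := by
        have he : k + (-(k - h)) = h := by ring
        calc latNorm h = latNorm (k + (-(k-h))) := by rw [he]
          _ ≤ K + latNorm (-(k-h)) := latNorm_add_le _ _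
          _ = K + latNorm (k-h) := by rw [latNorm_neg]
      by_cases hcase : 2*K ≤ latNorm h
      · have hb2 : latNorm h ≤ 2 * latNorm (k - h) := by linarith
        have hle : (1:ℝ)/(latNorm h^2 * latNorm (k-h)^2) ≤ 4 * (1/latNorm h^4) := by
          rw [show (4:ℝ) * (1/latNorm h^4) = 4/latNorm h^4 by ring,
            div_le_div_iff₀ (by positivity) (by positivity)]
          have hsq : latNorm h ^ 2 ≤ 4 * latNorm (k-h)^2 := by nlinarith
          nlinarith [mul_le_mul_of_nonneg_left hsq (sq_nonneg (latNorm h))]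
        calc ENNReal.ofReal (1/(latNorm h^2 * latNorm (k-h)^2))
            ≤ ENNReal.ofReal (4 * (1/latNorm h^4)) := ENNReal.ofReal_le_ofReal hle
          _ = f₃ h := by simp only [hf₃]; simp only [hh, hcase, ne_eq, not_false_iff, and_self, if_true]
          _ ≤ f₁ h + f₂ h + f₃ h := le_add_self
      · push_neg at hcase
        by_cases hab : latNorm h ≤ latNorm (k - h)
        · have hKb : K ≤ 2 * latNorm (k - h) := by linarith
          have hle : (1:ℝ)/(latNorm h^2 * latNorm (k-h)^2) ≤ (4/K^2) * (1/latNorm h^2) := by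
            rw [show (4/K^2) * (1/latNorm h^2) = 4/(K^2 * latNorm h^2) by
              rw [div_mul_div_comm, mul_one],
              div_le_div_iff₀ (by positivity) (by positivity)]
            have hsq : K ^ 2 ≤ 4 * latNorm (k-h)^2 := by nlinarith
            nlinarith [mul_le_mul_of_nonneg_left hsq (sq_nonneg (latNorm h))]
          calc ENNReal.ofReal (1/(latNorm h^2 * latNorm (k-h)^2))
              ≤ ENNReal.ofReal ((4/K^2) * (1/latNorm h^2)) := ENNReal.ofReal_le_ofReal hle
            _ = f₁ h := by
                simp only [hf₁]
                simp only [hh, ne_eq, not_false_iff, true_and, if_pos (le_of_lt hcase)]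
            _ ≤ f₁ h + f₂ h + f₃ h := by
                exact le_add_right (le_add_right le_rfl)
        · push_neg at hab
          have hKa : K ≤ 2 * latNorm h := by linarith
          have hb3 : latNorm (k - h) ≤ 3*K := by linarith
          have hle : (1:ℝ)/(latNorm h^2 * latNorm (k-h)^2) ≤ (4/K^2) * (1/latNorm (k-h)^2) := by
            rw [show (4/K^2) * (1/latNorm (k-h)^2) = 4/(K^2 * latNorm (k-h)^2) by
              rw [div_mul_div_comm, mul_one],
              div_le_div_iff₀ (by positivity) (by positivity)]
            have hsq : K ^ 2 ≤ 4 * latNorm h^2 := by nlinarith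
            nlinarith [mul_le_mul_of_nonneg_left hsq (sq_nonneg (latNorm (k-h)))]
          calc ENNReal.ofReal (1/(latNorm h^2 * latNorm (k-h)^2))
              ≤ ENNReal.ofReal ((4/K^2) * (1/latNorm (k-h)^2)) := ENNReal.ofReal_le_ofReal hle
            _ = f₂ h := by
                simp only [hf₂]
                simp only [hkh, ne_eq, not_false_iff, true_and, if_pos hb3]
            _ ≤ f₁ h + f₂ h + f₃ h := by
                exact le_add_right (le_add_left le_rfl)
    · exact zero_le
  have hsplit : ∑' h : ℤ × ℤ, (f₁ h + f₂ h + f₃ h)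
      = (∑' h, f₁ h) + (∑' h, f₂ h) + (∑' h, f₃ h) := by
    rw [ENNReal.tsum_add, ENNReal.tsum_add]
  -- bound T₁
  have hT₁ : ∑' h, f₁ h ≤ ENNReal.ofReal (4/K^2) * ENNReal.ofReal (32*(1+Real.log (2*(2*K)))) := by
    have : ∀ h : ℤ × ℤ, f₁ h = ENNReal.ofReal (4/K^2) *
        (if h ≠ 0 ∧ latNorm h ≤ 2*K then ENNReal.ofReal (1/latNorm h^2) else 0) := by
      intro h
      simp only [hf₁]
      split_ifs with hc
      · rw [← ENNReal.ofReal_mul (by positivity)]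
      · rw [mul_zero]
    rw [tsum_congr this, ENNReal.tsum_mul_left]
    exact mul_le_mul_right (latS1 (2*K) (by linarith)) _
  have hT₂ : ∑' h, f₂ h ≤ ENNReal.ofReal (4/K^2) * ENNReal.ofReal (32*(1+Real.log (2*(3*K)))) := by
    set F : ℤ × ℤ → ℝ≥0∞ := fun g => if g ≠ 0 ∧ latNorm g ≤ 3*K then
      ENNReal.ofReal ((4/K^2) * (1/latNorm g^2)) else 0 with hF
    have hre : ∑' h, f₂ h = ∑' g, F g := by
      have : ∀ h, f₂ h = F ((Equiv.subLeft k) h) := by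
        intro h
        simp only [hf₂, hF, Equiv.subLeft_apply]
      rw [tsum_congr this]
      exact (Equiv.subLeft k).tsum_eq F
    rw [hre]
    have : ∀ g : ℤ × ℤ, F g = ENNReal.ofReal (4/K^2) *
        (if g ≠ 0 ∧ latNorm g ≤ 3*K then ENNReal.ofReal (1/latNorm g^2) else 0) := by
      intro g
      simp only [hF]
      split_ifs with hc
      · rw [← ENNReal.ofReal_mul (by positivity)]
      · rw [mul_zero]
    rw [tsum_congr this, ENNReal.tsum_mul_left]
    exact mul_le_mul_right (latS1 (3*K) (by linarith)) _
  have hT₃ : ∑' h, f₃ h ≤ ENNReal.ofReal 4 * ENNReal.ofReal (256/(2*K)^2) := by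
    have : ∀ h : ℤ × ℤ, f₃ h = ENNReal.ofReal 4 *
        (if h ≠ 0 ∧ 2*K ≤ latNorm h then ENNReal.ofReal (1/latNorm h^4) else 0) := by
      intro h
      simp only [hf₃]
      split_ifs with hc
      · rw [← ENNReal.ofReal_mul (by norm_num)]
      · rw [mul_zero]
    rw [tsum_congr this, ENNReal.tsum_mul_left]
    exact mul_le_mul_right (latS2 (2*K) (by linarith)) _
  have hlgA : 0 ≤ Real.log (2*(2*K)) := Real.log_nonneg (by linarith)
  have hlgB : 0 ≤ Real.log (2*(3*K)) := Real.log_nonneg (by linarith)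
  have hnn1 : 0 ≤ (4/K^2) * (32*(1+Real.log (2*(2*K)))) :=
    mul_nonneg (by positivity) (by linarith)
  have hnn2 : 0 ≤ (4/K^2) * (32*(1+Real.log (2*(3*K)))) :=
    mul_nonneg (by positivity) (by linarith)
  set L := Real.log (1 + K) with hL
  have hLpos : Real.log 2 ≤ L := by
    rw [hL]
    exact Real.log_le_log (by norm_num) (by linarith)
  have hlog4 : Real.log (2*(2*K)) ≤ Real.log 6 + L := by
    calc Real.log (2*(2*K)) ≤ Real.log (6*(1+K)) :=
          Real.log_le_log (by positivity) (by nlinarith)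
      _ = Real.log 6 + L := Real.log_mul (by norm_num) (by positivity)
  have hlog6' : Real.log (2*(3*K)) ≤ Real.log 6 + L := by
    calc Real.log (2*(3*K)) ≤ Real.log (6*(1+K)) :=
          Real.log_le_log (by positivity) (by nlinarith)
      _ = Real.log 6 + L := Real.log_mul (by norm_num) (by positivity)
  calc ∑' h : ℤ × ℤ, (if h ≠ 0 ∧ k - h ≠ 0 then
        ENNReal.ofReal (1/(latNorm h^2 * latNorm (k-h)^2)) else 0)
      ≤ ∑' h : ℤ × ℤ, (f₁ h + f₂ h + f₃ h) := ENNReal.tsum_le_tsum hpt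
    _ = (∑' h, f₁ h) + (∑' h, f₂ h) + (∑' h, f₃ h) := hsplit
    _ ≤ ENNReal.ofReal (4/K^2) * ENNReal.ofReal (32*(1+Real.log (2*(2*K))))
        + ENNReal.ofReal (4/K^2) * ENNReal.ofReal (32*(1+Real.log (2*(3*K))))
        + ENNReal.ofReal 4 * ENNReal.ofReal (256/(2*K)^2) := by
        exact add_le_add (add_le_add hT₁ hT₂) hT₃
    _ = ENNReal.ofReal ((4/K^2) * (32*(1+Real.log (2*(2*K))))
        + (4/K^2) * (32*(1+Real.log (2*(3*K)))) + 4 * (256/(2*K)^2)) := by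
        rw [← ENNReal.ofReal_mul (by positivity : (0:ℝ) ≤ 4/K^2),
          ← ENNReal.ofReal_mul (by positivity : (0:ℝ) ≤ 4/K^2),
          ← ENNReal.ofReal_mul (by norm_num : (0:ℝ) ≤ 4),
          ← ENNReal.ofReal_add hnn1 hnn2,
          ← ENNReal.ofReal_add (by linarith) (by positivity)]
    _ ≤ ENNReal.ofReal (C₁ * L / K^2) := by
        apply ENNReal.ofReal_le_ofReal
        rw [show (4/K^2) * (32*(1+Real.log (2*(2*K)))) + (4/K^2) * (32*(1+Real.log (2*(3*K))))
          + 4 * (256/(2*K)^2)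
          = (128*(1+Real.log (2*(2*K))) + 128*(1+Real.log (2*(3*K))) + 256)/K^2 by
            field_simp; ring]
        rw [div_le_div_iff₀ (by positivity) (by positivity)]
        have hmain : 128*(1+Real.log (2*(2*K))) + 128*(1+Real.log (2*(3*K))) + 256 ≤ C₁ * L := by
          have h1 : 128*(1+Real.log (2*(2*K))) ≤ 128*(1 + Real.log 6 + L) := by linarith
          have h2 : 128*(1+Real.log (2*(3*K))) ≤ 128*(1 + Real.log 6 + L) := by linarith
          rw [hC₁]
          set t := (2+Real.log 6)/Real.log 2 with htdef
          have htpos : 0 < t := by positivity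
          have ht2 : t * Real.log 2 = 2 + Real.log 6 := by
            rw [htdef]; field_simp
          have hkey2 : 256 * (t * Real.log 2) ≤ 256 * (t * L) := by
            have := mul_le_mul_of_nonneg_left hLpos (le_of_lt htpos)
            linarith
          have hexp : 256*(t+1)*L = 256*(t*L) + 256*L := by ring
          linarith [h1, h2, hkey2, ht2, hexp]
        nlinarith [hmain, sq_nonneg K, hKpos]

noncomputable def lemBC (γ : ℝ) (hγ : 2 < γ) : ℝ := 2 * Classical.choose (latS3 γ hγ) * (2:ℝ)^γ

lemma lemBC_pos (γ : ℝ) (hγ : 2 < γ) : 0 < lemBC γ hγ := by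
  obtain ⟨hc, -⟩ := Classical.choose_spec (latS3 γ hγ)
  have h2γ : (0:ℝ) < (2:ℝ)^γ := Real.rpow_pos_of_pos two_pos γ
  unfold lemBC
  positivity

lemma lemmaB (γ : ℝ) (hγ : 2 < γ) (n : ℤ × ℤ) (hn : n ≠ 0) :
    ∑' g : ℤ × ℤ, (if g ≠ 0 ∧ n - g ≠ 0 then
        ENNReal.ofReal (1/(latNorm g ^ γ * latNorm (n-g) ^ γ)) else 0)
      ≤ ENNReal.ofReal (lemBC γ hγ / latNorm n ^ γ) := by
  obtain ⟨hc, hS3⟩ := Classical.choose_spec (latS3 γ hγ)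
  set c := Classical.choose (latS3 γ hγ) with hcdef
  have hBC : lemBC γ hγ = 2 * c * (2:ℝ)^γ := rfl
  rw [hBC]
  have h2γ : (0:ℝ) < (2:ℝ)^γ := Real.rpow_pos_of_pos two_pos γ
  set N := latNorm n with hNdef
  have hN1 : 1 ≤ N := one_le_latNorm hn
  have hNpos : 0 < N := by linarith
  have hNγ : (0:ℝ) < N ^ γ := Real.rpow_pos_of_pos hNpos γ
  set u₁ : ℤ × ℤ → ℝ≥0∞ := fun g => ENNReal.ofReal ((2:ℝ)^γ/N^γ) *
    (if g ≠ 0 then ENNReal.ofReal (1/latNorm g ^ γ) else 0) with hu₁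
  set u₂ : ℤ × ℤ → ℝ≥0∞ := fun g => ENNReal.ofReal ((2:ℝ)^γ/N^γ) *
    (if n - g ≠ 0 then ENNReal.ofReal (1/latNorm (n-g) ^ γ) else 0) with hu₂
  have hpt : ∀ g : ℤ × ℤ, (if g ≠ 0 ∧ n - g ≠ 0 then
      ENNReal.ofReal (1/(latNorm g ^ γ * latNorm (n-g) ^ γ)) else 0) ≤ u₁ g + u₂ g := by
    intro g
    split_ifs with hcnd
    · obtain ⟨hg, hng⟩ := hcnd
      have ha : 1 ≤ latNorm g := one_le_latNorm hg
      have hb : 1 ≤ latNorm (n - g) := one_le_latNorm hng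
      have hapos : 0 < latNorm g := by linarith
      have hbpos : 0 < latNorm (n - g) := by linarith
      have haγ : (0:ℝ) < latNorm g ^ γ := Real.rpow_pos_of_pos hapos γ
      have hbγ : (0:ℝ) < latNorm (n-g) ^ γ := Real.rpow_pos_of_pos hbpos γ
      have t1 : N ≤ latNorm g + latNorm (n - g) := by
        have he : g + (n - g) = n := by ring
        calc N = latNorm (g + (n - g)) := by rw [he]
          _ ≤ latNorm g + latNorm (n - g) := latNorm_add_le _ _
      by_cases hab : latNorm g ≤ latNorm (n - g)
      · have hNb : N ≤ 2 * latNorm (n - g) := by linarith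
        have hrp : N ^ γ ≤ (2 * latNorm (n-g)) ^ γ :=
          Real.rpow_le_rpow (le_of_lt hNpos) hNb (by linarith)
        rw [Real.mul_rpow (by norm_num) (le_of_lt hbpos)] at hrp
        have hle : (1:ℝ)/(latNorm g ^ γ * latNorm (n-g) ^ γ)
            ≤ ((2:ℝ)^γ/N^γ) * (1/latNorm g ^ γ) := by
          rw [show ((2:ℝ)^γ/N^γ) * (1/latNorm g ^ γ) = (2:ℝ)^γ/(N^γ * latNorm g ^ γ) by
            rw [div_mul_div_comm, mul_one],
            div_le_div_iff₀ (by positivity) (by positivity)]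
          nlinarith [mul_le_mul_of_nonneg_left hrp (le_of_lt haγ)]
        calc ENNReal.ofReal (1/(latNorm g ^ γ * latNorm (n-g) ^ γ))
            ≤ ENNReal.ofReal (((2:ℝ)^γ/N^γ) * (1/latNorm g ^ γ)) := ENNReal.ofReal_le_ofReal hle
          _ = u₁ g := by
              simp only [hu₁]
              rw [if_pos hg, ← ENNReal.ofReal_mul (by positivity)]
          _ ≤ u₁ g + u₂ g := le_add_right le_rfl
      · push_neg at hab
        have hNa : N ≤ 2 * latNorm g := by linarith
        have hrp : N ^ γ ≤ (2 * latNorm g) ^ γ :=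
          Real.rpow_le_rpow (le_of_lt hNpos) hNa (by linarith)
        rw [Real.mul_rpow (by norm_num) (le_of_lt hapos)] at hrp
        have hle : (1:ℝ)/(latNorm g ^ γ * latNorm (n-g) ^ γ)
            ≤ ((2:ℝ)^γ/N^γ) * (1/latNorm (n-g) ^ γ) := by
          rw [show ((2:ℝ)^γ/N^γ) * (1/latNorm (n-g) ^ γ) = (2:ℝ)^γ/(N^γ * latNorm (n-g) ^ γ) by
            rw [div_mul_div_comm, mul_one],
            div_le_div_iff₀ (by positivity) (by positivity)]
          nlinarith [mul_le_mul_of_nonneg_left hrp (le_of_lt hbγ)]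
        calc ENNReal.ofReal (1/(latNorm g ^ γ * latNorm (n-g) ^ γ))
            ≤ ENNReal.ofReal (((2:ℝ)^γ/N^γ) * (1/latNorm (n-g) ^ γ)) :=
              ENNReal.ofReal_le_ofReal hle
          _ = u₂ g := by
              simp only [hu₂]
              rw [if_pos hng, ← ENNReal.ofReal_mul (by positivity)]
          _ ≤ u₁ g + u₂ g := le_add_left le_rfl
    · exact zero_le
  have hU₁ : ∑' g, u₁ g ≤ ENNReal.ofReal ((2:ℝ)^γ/N^γ) * ENNReal.ofReal c := by
    simp only [hu₁]
    rw [ENNReal.tsum_mul_left]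
    exact mul_le_mul_right hS3 _
  have hU₂ : ∑' g, u₂ g ≤ ENNReal.ofReal ((2:ℝ)^γ/N^γ) * ENNReal.ofReal c := by
    simp only [hu₂]
    rw [ENNReal.tsum_mul_left]
    refine mul_le_mul_right ?_ _
    have hre : ∑' g : ℤ × ℤ, (if n - g ≠ 0 then ENNReal.ofReal (1/latNorm (n-g) ^ γ) else 0)
        = ∑' g : ℤ × ℤ, (if g ≠ 0 then ENNReal.ofReal (1/latNorm g ^ γ) else 0) := by
      exact (Equiv.subLeft n).tsum_eq
        (fun g => if g ≠ 0 then ENNReal.ofReal (1/latNorm g ^ γ) else 0)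
    rw [hre]
    exact hS3
  calc ∑' g : ℤ × ℤ, (if g ≠ 0 ∧ n - g ≠ 0 then
        ENNReal.ofReal (1/(latNorm g ^ γ * latNorm (n-g) ^ γ)) else 0)
      ≤ ∑' g : ℤ × ℤ, (u₁ g + u₂ g) := ENNReal.tsum_le_tsum hpt
    _ = (∑' g, u₁ g) + (∑' g, u₂ g) := ENNReal.tsum_add
    _ ≤ ENNReal.ofReal ((2:ℝ)^γ/N^γ) * ENNReal.ofReal c
        + ENNReal.ofReal ((2:ℝ)^γ/N^γ) * ENNReal.ofReal c := add_le_add hU₁ hU₂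
    _ = ENNReal.ofReal ((2 * c * (2:ℝ)^γ) / N ^ γ) := by
        rw [← ENNReal.ofReal_mul (by positivity : (0:ℝ) ≤ (2:ℝ)^γ/N^γ),
          ← ENNReal.ofReal_add (by positivity) (by positivity)]
        congr 1
        field_simp
        ring

end LatAux


open LatAux in
/-- Cauchy–Schwarz lattice sum estimate: for `β ∈ (0,1)` there is `C` such that for
all nonzero `k, m₁, ℓ₂ ∈ ℤ²`,
`∑_{h₁+ℓ₁=k} |h₁|⁻¹|ℓ₁|⁻¹ |h₁-m₁|^{-(2-β)} |ℓ₂-h₁+m₁|^{-(2-β)}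
  ≤ C √(log(1+|k|)) / (|k| |ℓ₂|^{2-β})`,
the sum being over those `h₁` for which all four arguments are nonzero. -/
theorem cauchy_schwarz_lattice_sum_estimate (β : ℝ) (hβ : β ∈ Set.Ioo (0:ℝ) 1) :
    ∃ C : ℝ, 0 < C ∧ ∀ k m₁ ℓ₂ : ℤ × ℤ, k ≠ 0 → m₁ ≠ 0 → ℓ₂ ≠ 0 →
      (∑' h₁ : {h : ℤ × ℤ //
          h ≠ 0 ∧ k - h ≠ 0 ∧ h - m₁ ≠ 0 ∧ ℓ₂ - h + m₁ ≠ 0},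
        ENNReal.ofReal
          (1 / (latNorm h₁.1 * latNorm (k - h₁.1) *
            latNorm (h₁.1 - m₁) ^ (2 - β) * latNorm (ℓ₂ - h₁.1 + m₁) ^ (2 - β))))
        ≤ ENNReal.ofReal
            (C * Real.sqrt (Real.log (1 + latNorm k)) /
              (latNorm k * latNorm ℓ₂ ^ (2 - β))) := by
  obtain ⟨hβ0, hβ1⟩ := hβ
  set p : ℝ := 2 - β with hpdef
  have hp1 : 1 < p := by rw [hpdef]; linarith
  set γ : ℝ := 2*(2-β) with hγdef
  have hγ2 : 2 < γ := by rw [hγdef]; linarith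
  have hpγ : p + p = γ := by rw [hpdef, hγdef]; ring
  refine ⟨Real.sqrt lemAC * Real.sqrt (lemBC γ hγ2),
    mul_pos (Real.sqrt_pos.mpr lemAC_pos) (Real.sqrt_pos.mpr (lemBC_pos γ hγ2)), ?_⟩
  intro k m₁ ℓ₂ hk hm hℓ
  set K := latNorm k with hKdef
  have hK1 : 1 ≤ K := one_le_latNorm hk
  have hKpos : 0 < K := by linarith
  set Nℓ := latNorm ℓ₂ with hNℓdef
  have hNℓ1 : 1 ≤ Nℓ := one_le_latNorm hℓ
  have hNℓpos : 0 < Nℓ := by linarith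
  set L := Real.log (1 + K) with hLdef
  have hL0 : 0 ≤ L := by
    rw [hLdef]; exact Real.log_nonneg (by linarith)
  set x : ℤ × ℤ → ℝ≥0∞ := fun h => if h ≠ 0 ∧ k - h ≠ 0 then
    ENNReal.ofReal (1/(latNorm h * latNorm (k-h))) else 0 with hx
  set y : ℤ × ℤ → ℝ≥0∞ := fun h => if h - m₁ ≠ 0 ∧ ℓ₂ - h + m₁ ≠ 0 then
    ENNReal.ofReal (1/(latNorm (h-m₁) ^ p * latNorm (ℓ₂-h+m₁) ^ p)) else 0 with hy
  -- step 1: subtype sum to indicator sum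
  refine le_trans (le_of_eq (tsum_subtype
    {h : ℤ × ℤ | h ≠ 0 ∧ k - h ≠ 0 ∧ h - m₁ ≠ 0 ∧ ℓ₂ - h + m₁ ≠ 0}
    (fun h => ENNReal.ofReal (1 / (latNorm h * latNorm (k - h) * latNorm (h - m₁) ^ p *
      latNorm (ℓ₂ - h + m₁) ^ p))))) ?_
  -- step 2: pointwise factorization
  have hfact : ∀ h : ℤ × ℤ,
      Set.indicator {h : ℤ × ℤ | h ≠ 0 ∧ k - h ≠ 0 ∧ h - m₁ ≠ 0 ∧ ℓ₂ - h + m₁ ≠ 0}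
        (fun h => ENNReal.ofReal (1 / (latNorm h * latNorm (k - h) * latNorm (h - m₁) ^ p *
          latNorm (ℓ₂ - h + m₁) ^ p))) h = x h * y h := by
    intro h
    rw [Set.indicator_apply]
    simp only [Set.mem_setOf_eq, hx, hy]
    by_cases h12 : h ≠ 0 ∧ k - h ≠ 0
    · by_cases h34 : h - m₁ ≠ 0 ∧ ℓ₂ - h + m₁ ≠ 0
      · rw [if_pos ⟨h12.1, h12.2, h34.1, h34.2⟩, if_pos h12, if_pos h34,
          ← ENNReal.ofReal_mul (one_div_nonneg.mpr (mul_nonneg (latNorm_nonneg _)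
            (latNorm_nonneg _)))]
        congr 1
        rw [div_mul_div_comm, one_mul, mul_assoc]
      · rw [if_neg (fun hP => h34 ⟨hP.2.2.1, hP.2.2.2⟩), if_neg h34, mul_zero]
    · rw [if_neg (fun hP => h12 ⟨hP.1, hP.2.1⟩), if_neg h12, zero_mul]
  rw [tsum_congr hfact]
  -- step 3: Cauchy–Schwarz
  refine le_trans (tsum_cauchy_schwarz x y) ?_
  -- step 4: bound the x² sum
  have hx2 : ∀ h : ℤ × ℤ, x h ^ (2:ℝ) = (if h ≠ 0 ∧ k - h ≠ 0 then
      ENNReal.ofReal (1/(latNorm h^2 * latNorm (k-h)^2)) else 0) := by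
    intro h
    simp only [hx]
    split_ifs with hc
    · rw [ENNReal.ofReal_rpow_of_nonneg (one_div_nonneg.mpr (mul_nonneg (latNorm_nonneg _)
        (latNorm_nonneg _))) (by norm_num)]
      congr 1
      rw [show (2:ℝ) = ((2:ℕ):ℝ) by norm_num, Real.rpow_natCast]
      rw [div_pow, one_pow, mul_pow]
    · exact ENNReal.zero_rpow_of_pos (by norm_num)
  have hxsum : ∑' h : ℤ × ℤ, x h ^ (2:ℝ) ≤ ENNReal.ofReal (lemAC * L / K ^ 2) := by
    rw [tsum_congr hx2]
    exact lemmaA k hk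
  -- step 5: bound the y² sum
  have hy2 : ∀ h : ℤ × ℤ, y h ^ (2:ℝ) = (if h - m₁ ≠ 0 ∧ ℓ₂ - h + m₁ ≠ 0 then
      ENNReal.ofReal (1/(latNorm (h-m₁) ^ γ * latNorm (ℓ₂-h+m₁) ^ γ)) else 0) := by
    intro h
    simp only [hy]
    split_ifs with hc
    · have hc1 : 0 < latNorm (h - m₁) := latNorm_pos hc.1
      have hc2 : 0 < latNorm (ℓ₂ - h + m₁) := latNorm_pos hc.2
      rw [ENNReal.ofReal_rpow_of_nonneg (one_div_nonneg.mpr (mul_nonneg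
        (Real.rpow_nonneg (latNorm_nonneg _) p) (Real.rpow_nonneg (latNorm_nonneg _) p)))
        (by norm_num)]
      congr 1
      have e1 : (latNorm (h-m₁) ^ p)^(2:ℕ) = latNorm (h-m₁) ^ γ := by
        rw [pow_two, ← Real.rpow_add hc1, hpγ]
      have e2 : (latNorm (ℓ₂-h+m₁) ^ p)^(2:ℕ) = latNorm (ℓ₂-h+m₁) ^ γ := by
        rw [pow_two, ← Real.rpow_add hc2, hpγ]
      rw [show (2:ℝ) = ((2:ℕ):ℝ) by norm_num, Real.rpow_natCast]
      rw [div_pow, one_pow, mul_pow, e1, e2]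
    · exact ENNReal.zero_rpow_of_pos (by norm_num)
  have hysum : ∑' h : ℤ × ℤ, y h ^ (2:ℝ)
      ≤ ENNReal.ofReal (lemBC γ hγ2 / Nℓ ^ γ) := by
    rw [tsum_congr hy2]
    set F : ℤ × ℤ → ℝ≥0∞ := fun g => if g ≠ 0 ∧ ℓ₂ - g ≠ 0 then
      ENNReal.ofReal (1/(latNorm g ^ γ * latNorm (ℓ₂-g) ^ γ)) else 0 with hF
    have hre : ∑' h : ℤ × ℤ, (if h - m₁ ≠ 0 ∧ ℓ₂ - h + m₁ ≠ 0 then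
        ENNReal.ofReal (1/(latNorm (h-m₁) ^ γ * latNorm (ℓ₂-h+m₁) ^ γ)) else 0)
        = ∑' g : ℤ × ℤ, F g := by
      have hptw : ∀ h : ℤ × ℤ, (if h - m₁ ≠ 0 ∧ ℓ₂ - h + m₁ ≠ 0 then
          ENNReal.ofReal (1/(latNorm (h-m₁) ^ γ * latNorm (ℓ₂-h+m₁) ^ γ)) else 0)
          = F ((Equiv.subRight m₁) h) := by
        intro h
        simp only [hF, Equiv.subRight_apply]
        rw [show ℓ₂ - (h - m₁) = ℓ₂ - h + m₁ by ring]
      rw [tsum_congr hptw]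
      exact (Equiv.subRight m₁).tsum_eq F
    rw [hre]
    exact lemmaB γ hγ2 ℓ₂ hℓ
  -- step 6: combine
  calc (∑' h : ℤ × ℤ, x h ^ (2:ℝ)) ^ (1/2:ℝ) * (∑' h : ℤ × ℤ, y h ^ (2:ℝ)) ^ (1/2:ℝ)
      ≤ ENNReal.ofReal (lemAC * L / K ^ 2) ^ (1/2:ℝ)
        * ENNReal.ofReal (lemBC γ hγ2 / Nℓ ^ γ) ^ (1/2:ℝ) :=
        mul_le_mul' (ENNReal.rpow_le_rpow hxsum (by norm_num))
          (ENNReal.rpow_le_rpow hysum (by norm_num))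
    _ = ENNReal.ofReal ((lemAC * L / K ^ 2) ^ (1/2:ℝ) * (lemBC γ hγ2 / Nℓ ^ γ) ^ (1/2:ℝ)) := by
        have hA_nonneg : (0:ℝ) ≤ lemAC * L / K ^ 2 :=
          div_nonneg (mul_nonneg (le_of_lt lemAC_pos) hL0) (sq_nonneg K)
        have hB_nonneg : (0:ℝ) ≤ lemBC γ hγ2 / Nℓ ^ γ :=
          div_nonneg (le_of_lt (lemBC_pos γ hγ2)) (Real.rpow_nonneg (by linarith) γ)
        rw [ENNReal.ofReal_rpow_of_nonneg hA_nonneg (by norm_num),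
          ENNReal.ofReal_rpow_of_nonneg hB_nonneg (by norm_num),
          ← ENNReal.ofReal_mul (Real.rpow_nonneg hA_nonneg _)]
    _ ≤ ENNReal.ofReal (Real.sqrt lemAC * Real.sqrt (lemBC γ hγ2) * Real.sqrt L / (K * Nℓ ^ p)) := by
        apply ENNReal.ofReal_le_ofReal
        apply le_of_eq
        have hA0 : (0:ℝ) ≤ lemAC := le_of_lt lemAC_pos
        have hB0 : (0:ℝ) ≤ lemBC γ hγ2 := le_of_lt (lemBC_pos γ hγ2)
        have e1 : (lemAC * L / K ^ 2) ^ (1/2:ℝ) = Real.sqrt lemAC * Real.sqrt L / K := by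
          rw [← Real.sqrt_eq_rpow, Real.sqrt_div (mul_nonneg hA0 hL0), Real.sqrt_mul hA0,
            Real.sqrt_sq (le_of_lt hKpos)]
        have e2 : (lemBC γ hγ2 / Nℓ ^ γ) ^ (1/2:ℝ) = Real.sqrt (lemBC γ hγ2) / Nℓ ^ p := by
          rw [← Real.sqrt_eq_rpow, Real.sqrt_div hB0]
          congr 1
          rw [Real.sqrt_eq_rpow, ← Real.rpow_mul (le_of_lt hNℓpos)]
          congr 1
          rw [hγdef, hpdef]
          ring
        rw [e1, e2]
        ring
    _ = ENNReal.ofReal (Real.sqrt lemAC * Real.sqrt (lemBC γ hγ2) *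
          Real.sqrt L / (K * Nℓ ^ p)) := rfl
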